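/- Let z and k be positive integers, let n = z + k, and let κ = ⟨κ₀,…,κ_n⟩ be a tuple of cardinals such that κᵢ = ℵ₀ for all i < z and the cardinals κ_z < κ_{z+1} < … < κ_{z+k} are uncountable and strictly increasing. Then H^k(X(κ)⁻, ℤ/2) ≠ 0; that is, there exists a k-cocycle on X(κ)⁻ that is not a k-coboundary. In particular, H^n(X(ℵ₀, ℵ₁, …, ℵ_{n+1})⁻, ℤ/2) ≠ 0 for every n ≥ 1. -/

import Mathlib

set_option linter.unusedSectionVars false

open Cardinal Function OnePoint

noncomputable section

instance (o : Ordinal) : TopologicalSpace o.ToType := ⊥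
instance (o : Ordinal) : DiscreteTopology o.ToType := ⟨rfl⟩
instance : TopologicalSpace (ZMod 2) := ⊥
instance : DiscreteTopology (ZMod 2) := ⟨rfl⟩

/-- `Alpha c` : the one-point compactification of the discrete space of cardinality `c`. -/
abbrev Alpha (c : Cardinal) : Type := OnePoint c.ord.ToType

variable {ι : Type} [Fintype ι] [DecidableEq ι]

/-- `DD κ A` : the set of points `x ∈ X(κ)` with `x i ≠ ∞` for all `i ∈ A`. -/
def DD (κ : ι → Cardinal) (A : Finset ι) : Set (∀ i, Alpha (κ i)) :=
  {x | ∀ i ∈ A, x i ≠ ∞}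

/-- `FF κ A` : the `A`-facet of `X(κ)`. -/
def FF (κ : ι → Cardinal) (A : Finset ι) : Set (∀ i, Alpha (κ i)) :=
  {x | ∀ i, x i ≠ ∞ ↔ i ∈ A}

/-- `X(κ)⁻`, the complement of the point `(∞,…,∞)`. -/
def Xminus (κ : ι → Cardinal) : Set (∀ i, Alpha (κ i)) :=
  {x | ∃ i, x i ≠ ∞}

/-- A (raw) cochain: a family of functions on the `DD κ A`. -/
abbrev Cochain (κ : ι → Cardinal) : Type :=
  ∀ A : Finset ι, ↥(DD κ A) → ZMod 2

/-- Restriction of a function on `D_A` to `D_B`, for `A ⊆ B`. -/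
def res {κ : ι → Cardinal} {A B : Finset ι} (h : A ⊆ B)
    (f : ↥(DD κ A) → ZMod 2) : ↥(DD κ B) → ZMod 2 :=
  fun x => f ⟨x.1, fun i hi => x.2 i (h hi)⟩

/-- The Čech coboundary `(df)_A = ∑_{i ∈ A} f_{A ∖ {i}}` (restricted to `D_A`). -/
def cb (κ : ι → Cardinal) (f : Cochain κ) : Cochain κ :=
  fun A x => ∑ i ∈ A, res (Finset.erase_subset i A) (f (A.erase i)) x

/-- `f` is a `k`-cochain: each `f_A` for `|A| = k+1` is continuous. -/
def IsCochain (κ : ι → Cardinal) (k : ℕ) (f : Cochain κ) : Prop :=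
  ∀ A : Finset ι, A.card = k + 1 → Continuous (f A)

/-- `f` is a `k`-cocycle. -/
def IsCocycle (κ : ι → Cardinal) (k : ℕ) (f : Cochain κ) : Prop :=
  IsCochain κ k f ∧ ∀ A : Finset ι, A.card = k + 2 → ∀ x, cb κ f A x = 0

/-- `f` is a `k`-coboundary: `f = dg` for some `(k-1)`-cochain `g`. -/
def IsCoboundary (κ : ι → Cardinal) (k : ℕ) (f : Cochain κ) : Prop :=
  ∃ g : Cochain κ, IsCochain κ (k - 1) g ∧
    ∀ A : Finset ι, A.card = k + 1 → ∀ x, f A x = cb κ g A x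

/-- `Y` is a `k`-Fubini partition of `X(κ)⁻`. -/
def IsFubini (κ : ι → Cardinal) (k : ℕ) (Y : ι → Set (∀ i, Alpha (κ i))) : Prop :=
  Pairwise (Disjoint on Y) ∧ (⋃ i, Y i) = Xminus κ ∧
  ∀ A : Finset ι, k + 1 ≤ A.card →
    (∀ i ∉ A, IsClopen ((Subtype.val : ↥(DD κ A) → _) ⁻¹' Y i)) ∧
    {x : ↥(Xminus κ) | (x : ∀ i, Alpha (κ i)) ∈ FF κ A} ⊆
      interior ((Subtype.val : ↥(Xminus κ) → _) ⁻¹' ⋃ i ∈ A, Y i)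

/-- `f` is a top-degree coboundary: a sum of functions, each extending continuously to
`D_{univ ∖ {j}}`. -/
def TopCoboundary (κ : ι → Cardinal)
    (f : (∀ i, (κ i).ord.ToType) → ZMod 2) : Prop :=
  ∃ g : ι → ((∀ i, (κ i).ord.ToType) → ZMod 2),
    (∀ x, f x = ∑ j, g j x) ∧
    ∀ j : ι, ∃ G : ↥(DD κ (Finset.univ.erase j)) → ZMod 2, Continuous G ∧
      ∀ x, g j x = G ⟨fun i => ((x i : (κ i).ord.ToType) : Alpha (κ i)),
        fun i _ => OnePoint.coe_ne_infty (x i)⟩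

/-- The group of `k`-cocycles. -/
def Zgrp (κ : ι → Cardinal) (k : ℕ) : AddSubgroup (Cochain κ) :=
  AddSubgroup.closure {f | IsCocycle κ k f}

/-- The group of `k`-coboundaries. -/
def Bgrp (κ : ι → Cardinal) (k : ℕ) : AddSubgroup (Cochain κ) :=
  AddSubgroup.closure {f | IsCoboundary κ k f}

/-- The `k`-th Čech cohomology group of `X(κ)⁻` with `ℤ/2` coefficients. -/
abbrev Hgrp (κ : ι → Cardinal) (k : ℕ) :=
  ↥(Zgrp κ k) ⧸ (Bgrp κ k).addSubgroupOf (Zgrp κ k)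

/-- The cohomology class of a `k`-cocycle. -/
abbrev mkH (κ : ι → Cardinal) (k : ℕ) (f : Cochain κ) (hf : IsCocycle κ k f) : Hgrp κ k :=
  QuotientAddGroup.mk ⟨f, AddSubgroup.subset_closure hf⟩

/-- Combine a point of `∏_{i ∉ B} α(κ i)` with a point of `∏_{i ∈ B} κ i`. -/
def combineBC (κ : ι → Cardinal) (B : Finset ι)
    (x : ∀ i : {i : ι // i ∉ B}, Alpha (κ i))
    (y : ∀ i : ↥B, (κ (i : ι)).ord.ToType) : ∀ i, Alpha (κ i) :=
  fun i => if h : i ∈ B then ((y ⟨i, h⟩ : (κ i).ord.ToType) : Alpha (κ i)) else x ⟨i, h⟩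

lemma combineBC_mem (κ : ι → Cardinal) (B : Finset ι)
    (x : ∀ i : {i : ι // i ∉ B}, Alpha (κ i))
    (y : ∀ i : ↥B, (κ (i : ι)).ord.ToType) : combineBC κ B x y ∈ DD κ B := by
  intro i hi
  simp only [combineBC, dif_pos hi]
  exact OnePoint.coe_ne_infty _

/-- The point `y^∞` : `y` on coordinates in `B`, `∞` outside `B`. -/
def extendInfty (κ : ι → Cardinal) (B : Finset ι)
    (y : ∀ i : ↥B, (κ (i : ι)).ord.ToType) : ∀ i, Alpha (κ i) :=
  combineBC κ B (fun _ => ∞) y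

lemma extendInfty_mem (κ : ι → Cardinal) (B : Finset ι)
    (y : ∀ i : ↥B, (κ (i : ι)).ord.ToType) : extendInfty κ B y ∈ DD κ B :=
  combineBC_mem κ B _ y

/-- The face restriction map `Res^k_B`. -/
def ResB (κ : ι → Cardinal) (B : Finset ι) (f : Cochain κ) :
    (∀ i : ↥B, (κ (i : ι)).ord.ToType) → ZMod 2 :=
  fun y => f B ⟨extendInfty κ B y, extendInfty_mem κ B y⟩

/-- The map `φ_{f,B}` sending `x` to `f_B(x, ·)`. -/
def phiMap (κ : ι → Cardinal) (B : Finset ι) (f : Cochain κ) :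
    (∀ i : {i : ι // i ∉ B}, Alpha (κ i)) → (∀ i : ↥B, (κ (i : ι)).ord.ToType) → ZMod 2 :=
  fun x y => f B ⟨combineBC κ B x y, combineBC_mem κ B x y⟩

/-- Combine a point `x` (used on the first `n-k+1` coordinates) with a tuple `y ∈ Q`
of values on the last `k` coordinates. -/
def combineQ {n : ℕ} (κ : Fin (n + 1) → Cardinal) (k : ℕ)
    (x : ∀ i, Alpha (κ i))
    (y : ∀ i : {i : Fin (n + 1) // n - k + 1 ≤ (i : ℕ)}, (κ (i : Fin (n + 1))).ord.ToType) :
    ∀ i, Alpha (κ i) :=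
  fun i => if h : n - k + 1 ≤ (i : ℕ) then
    ((y ⟨i, h⟩ : (κ i).ord.ToType) : Alpha (κ i)) else x i


section Helpers

attribute [local instance] Classical.propDecidable

variable {X : Type} [TopologicalSpace X] [DiscreteTopology X]

lemma isOpen_singleton_coe (t : X) : IsOpen ({(t : OnePoint X)} : Set (OnePoint X)) := by
  rw [OnePoint.isOpen_iff_of_notMem (by simp)]
  exact isOpen_discrete _

lemma finite_not_mem_of_isOpen_infty {u : Set (OnePoint X)} (hu : IsOpen u) (hinf : ∞ ∈ u) :
    {t : X | (t : OnePoint X) ∉ u}.Finite := by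
  rw [OnePoint.isOpen_iff_of_mem hinf] at hu
  exact hu.2.finite_of_discrete

lemma isOpen_compl_image_coe {E : Set X} (hE : E.Finite) :
    IsOpen ((OnePoint.some '' E)ᶜ) := by
  rw [OnePoint.isOpen_iff_of_mem (by simp [OnePoint.infty_ne_coe])]
  have hkey : (OnePoint.some ⁻¹' ((OnePoint.some '' E)ᶜ))ᶜ = E := by
    simp [Set.preimage_compl, Set.preimage_image_eq _ OnePoint.coe_injective]
  rw [hkey]
  exact ⟨isClosed_discrete _, hE.isCompact⟩

/-- extraction of the non-infinity value -/
def untop : ∀ (v : OnePoint X), v ≠ ∞ → X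
  | Option.some t, _ => t
  | Option.none, h => absurd rfl h

lemma coe_untop (v : OnePoint X) (h : v ≠ ∞) : OnePoint.some (untop v h) = v := by
  cases v with
  | infty => exact absurd rfl h
  | coe t => rfl

lemma continuous_ite_indicator {Y : Type*} [TopologicalSpace Y] {p : Y → Prop}
    (h1 : IsOpen {y | p y}) (h2 : IsOpen {y | ¬ p y}) :
    Continuous (fun y => if p y then (1 : ZMod 2) else 0) := by
  rw [continuous_discrete_rng]
  intro b
  by_cases hb1 : b = 1
  · subst hb1
    convert h1 using 1
    ext y
    by_cases hp : p y <;> simp [hp]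
  · by_cases hb0 : b = 0
    · subst hb0
      convert h2 using 1
      ext y
      by_cases hp : p y <;> simp [hp]
    · convert isOpen_empty (X := Y) using 1
      ext y
      by_cases hp : p y <;> simp [hp, eq_comm, hb1, hb0]

end Helpers

section Boxes

variable {ι : Type} [Fintype ι] [DecidableEq ι] {κ : ι → Cardinal}

/-- From continuity of `g` at `x0`, extract finite exceptional sets per coordinate. -/
lemma box_const {B : Finset ι} {g : ↥(DD κ B) → ZMod 2}
    (hg : Continuous g) (x0 : ∀ i, Alpha (κ i)) (hx0 : x0 ∈ DD κ B) :
    ∃ F : ∀ i, Set ((κ i).ord.ToType), (∀ i, (F i).Finite) ∧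
      ∀ x (hx : x ∈ DD κ B),
        (∀ i, x i = x0 i ∨ (x0 i = ∞ ∧ ∀ t, x i = OnePoint.some t → t ∉ F i)) →
        g ⟨x, hx⟩ = g ⟨x0, hx0⟩ := by
  have hW : g ⁻¹' {g ⟨x0, hx0⟩} ∈ nhds (⟨x0, hx0⟩ : ↥(DD κ B)) :=
    hg.continuousAt.preimage_mem_nhds ((isOpen_discrete _).mem_nhds rfl)
  rw [nhds_subtype_eq_comap, Filter.mem_comap] at hW
  obtain ⟨V, hV, hVW⟩ := hW
  rw [mem_nhds_iff] at hV
  obtain ⟨O, hOV, hO, hxO⟩ := hV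
  obtain ⟨I, u, hIu, hpi⟩ := isOpen_pi_iff.1 hO x0 hxO
  refine ⟨fun i => {t | x0 i = ∞ ∧ i ∈ I ∧ OnePoint.some t ∉ u i}, fun i => ?_, ?_⟩
  · by_cases hinf : x0 i = ∞
    · by_cases hiI : i ∈ I
      · have : {t : (κ i).ord.ToType | OnePoint.some t ∉ u i}.Finite :=
          finite_not_mem_of_isOpen_infty (hIu i hiI).1 (hinf ▸ (hIu i hiI).2)
        exact this.subset fun t ht => ht.2.2
      · exact (Set.finite_empty.subset (fun t ht => (hiI ht.2.1).elim))
    · exact (Set.finite_empty.subset (fun t ht => (hinf ht.1).elim))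
  · intro x hx hagree
    have hxpi : x ∈ (↑I : Set ι).pi u := by
      intro i hiI
      rcases hagree i with heq | ⟨hinf, hfa⟩
      · rw [heq]; exact (hIu i hiI).2
      · by_cases hxi : x i = ∞
        · rw [hxi, ← hinf]; exact (hIu i hiI).2
        · have ht := (coe_untop (x i) hxi).symm
          by_contra hcon
          exact hfa _ ht ⟨hinf, hiI, fun hmem => hcon (ht ▸ hmem)⟩
    exact hVW (hOV (hpi hxpi))

/-- The basic open box pinned at the non-infinity coordinates of `x0`,
avoiding finite sets `E i` at the infinity coordinates. -/
def BoxSet (κ : ι → Cardinal) (x0 : ∀ i, Alpha (κ i))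
    (E : ∀ i, Set ((κ i).ord.ToType)) : Set (∀ i, Alpha (κ i)) :=
  Set.univ.pi fun i =>
    {v | (x0 i = ∞ → v ∉ OnePoint.some '' E i) ∧ (x0 i ≠ ∞ → v = x0 i)}

lemma isOpen_BoxSet (x0 : ∀ i, Alpha (κ i)) (E : ∀ i, Set ((κ i).ord.ToType))
    (hE : ∀ i, (E i).Finite) : IsOpen (BoxSet κ x0 E) := by
  refine isOpen_set_pi Set.finite_univ fun i _ => ?_
  by_cases hinf : x0 i = ∞
  · have : {v : OnePoint (κ i).ord.ToType |
        (x0 i = ∞ → v ∉ OnePoint.some '' E i) ∧ (x0 i ≠ ∞ → v = x0 i)}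
        = (OnePoint.some '' E i)ᶜ := by
      ext v; simp only [Set.mem_setOf_eq, Set.mem_compl_iff]
      constructor
      · intro h; exact h.1 hinf
      · intro h; exact ⟨fun _ => h, fun hne => absurd hinf hne⟩
    rw [this]; exact isOpen_compl_image_coe (hE i)
  · have ht := (coe_untop (x0 i) hinf).symm
    have : {v : OnePoint (κ i).ord.ToType |
        (x0 i = ∞ → v ∉ OnePoint.some '' E i) ∧ (x0 i ≠ ∞ → v = x0 i)}
        = {OnePoint.some (untop (x0 i) hinf)} := by
      ext v; simp only [Set.mem_setOf_eq, Set.mem_singleton_iff]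
      constructor
      · intro h; rw [h.2 hinf]; exact ht
      · intro h; exact ⟨fun he => absurd he hinf, fun _ => h.trans ht.symm⟩
    rw [this]; exact isOpen_singleton_coe _

lemma mem_BoxSet_self (x0 : ∀ i, Alpha (κ i)) (E : ∀ i, Set ((κ i).ord.ToType)) :
    x0 ∈ BoxSet κ x0 E := by
  intro i _
  refine ⟨fun hinf => ?_, fun _ => rfl⟩
  rw [hinf]
  rintro ⟨t, _, ht⟩
  exact OnePoint.coe_ne_infty t ht

lemma eq_on_of_mem_BoxSet {x0 x : ∀ i, Alpha (κ i)} {E : ∀ i, Set ((κ i).ord.ToType)}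
    (hx : x ∈ BoxSet κ x0 E) {i : ι} (hi : x0 i ≠ ∞) : x i = x0 i :=
  (hx i (Set.mem_univ i)).2 hi

lemma not_mem_E_of_mem_BoxSet {x0 x : ∀ i, Alpha (κ i)} {E : ∀ i, Set ((κ i).ord.ToType)}
    (hx : x ∈ BoxSet κ x0 E) {i : ι} (hi : x0 i = ∞) {t : (κ i).ord.ToType}
    (ht : x i = OnePoint.some t) : t ∉ E i := by
  intro htE
  exact (hx i (Set.mem_univ i)).1 hi ⟨t, htE, ht.symm⟩

end Boxes

section Avoid
open Cardinal

lemma avoid : ∀ (m : ℕ) (τ : Fin m → Type) (_ : ∀ a, ℵ₀ < #(τ a))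
    (_ : ∀ a b : Fin m, a < b → #(τ a) < #(τ b))
    (Bad : ∀ a, (∀ b, τ b) → Set (τ a))
    (_ : ∀ a y, (Bad a y).Countable)
    (_ : ∀ a (y y' : ∀ b, τ b), (∀ b, b ≠ a → y b = y' b) → Bad a y = Bad a y'),
    ∃ y, ∀ a, y a ∉ Bad a y := by
  intro m
  induction m with
  | zero => exact fun τ _ _ Bad _ _ => ⟨fun a => a.elim0, fun a => a.elim0⟩
  | succ m ih =>
    intro τ h0 hcard Bad hBad hdep
    have hne : ∀ a, Nonempty (τ a) := fun a =>
      Cardinal.mk_ne_zero_iff.1 (ne_of_gt (lt_trans Cardinal.aleph0_pos (h0 a)))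
    obtain ⟨v0⟩ := hne (Fin.last m)
    set U : Set (τ (Fin.last m)) :=
      ⋃ (y' : ∀ b : Fin m, τ b.castSucc), Bad (Fin.last m) (Fin.snoc y' v0) with hUdef
    have hPle : #(∀ b : Fin m, τ b.castSucc) * ℵ₀ < #(τ (Fin.last m)) := by
      rcases Nat.eq_zero_or_pos m with hm | hm
      · subst hm
        have h1 : #(∀ b : Fin 0, τ b.castSucc) = 1 := by
          simp [Cardinal.mk_pi]
        rw [h1, one_mul]
        exact h0 _
      · have hamax : m - 1 < m := by omega
        set amax : Fin m := ⟨m - 1, hamax⟩ with hamaxdef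
        set μ := #(τ amax.castSucc) with hμ
        have hμinf : ℵ₀ ≤ μ := le_of_lt (h0 _)
        have hble : ∀ b : Fin m, #(τ b.castSucc) ≤ μ := by
          intro b
          rcases lt_or_eq_of_le (show b ≤ amax from by
            simp only [Fin.le_def]; show b.val ≤ m - 1; have := b.isLt; omega) with hlt | heq
          · exact le_of_lt (hcard _ _ (by simpa using hlt))
          · rw [heq]
        have hprod : #(∀ b : Fin m, τ b.castSucc) ≤ μ := by
          calc #(∀ b : Fin m, τ b.castSucc) = Cardinal.prod (fun b => #(τ b.castSucc)) :=
                Cardinal.mk_pi _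
            _ ≤ Cardinal.prod (fun _ : Fin m => μ) := Cardinal.prod_le_prod _ _ hble
            _ = μ ^ (#(Fin m)) := Cardinal.prod_const' _ _
            _ = μ ^ (m : Cardinal) := by rw [Cardinal.mk_fin]
            _ = μ ^ (m : ℕ) := Cardinal.power_natCast _ _
            _ = μ := Cardinal.power_nat_eq hμinf hm
        calc #(∀ b : Fin m, τ b.castSucc) * ℵ₀ ≤ μ * ℵ₀ :=
              mul_le_mul_left hprod _
          _ = μ := Cardinal.mul_aleph0_eq hμinf
          _ < #(τ (Fin.last m)) := hcard _ _ (Fin.castSucc_lt_last amax)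
    have hUlt : #U < #(τ (Fin.last m)) := by
      refine lt_of_le_of_lt ?_ hPle
      refine le_trans (Cardinal.mk_iUnion_le _) ?_
      refine mul_le_mul_right ?_ _
      exact ciSup_le' fun y' => (hBad _ _).le_aleph0
    have hv : ∃ v, v ∉ U := by
      by_contra hcon
      push_neg at hcon
      have : #(τ (Fin.last m)) ≤ #U := by
        rw [← Cardinal.mk_univ]
        exact Cardinal.mk_le_mk_of_subset fun v _ => hcon v
      exact absurd hUlt (not_lt_of_ge this)
    obtain ⟨v, hv⟩ := hv
    obtain ⟨y', hy'⟩ := ih (fun b => τ b.castSucc) (fun b => h0 _)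
      (fun a b hab => hcard _ _ (by simpa using hab))
      (fun b y'' => Bad b.castSucc (Fin.snoc y'' v))
      (fun b y'' => hBad _ _)
      (fun a y1 y2 hag => by
        refine hdep _ _ _ ?_
        intro b hb
        refine Fin.lastCases ?_ ?_ b hb
        · intro _; simp [Fin.snoc_last]
        · intro c hc
          simp only [Fin.snoc_castSucc]
          exact hag c (fun hce => hc (by rw [hce])))
    refine ⟨Fin.snoc y' v, fun a => ?_⟩
    refine Fin.lastCases ?_ ?_ a
    · have heqBad : Bad (Fin.last m) (Fin.snoc y' v) = Bad (Fin.last m) (Fin.snoc y' v0) := by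
        refine hdep _ _ _ ?_
        intro b hb
        refine Fin.lastCases ?_ ?_ b hb
        · intro hbad; exact absurd rfl hbad
        · intro c _; simp [Fin.snoc_castSucc]
      rw [Fin.snoc_last, heqBad]
      exact fun hmem => hv (Set.mem_iUnion.2 ⟨y', hmem⟩)
    · intro b
      rw [Fin.snoc_castSucc]
      exact hy' b

end Avoid

section Main

attribute [local instance] Classical.propDecidable

variable {N : ℕ} (z k : ℕ) (κ : Fin N → Cardinal)

def CC : Finset (Fin N) := Finset.univ.filter fun i => z ≤ i.val ∧ i.val < z + k

lemma mem_CC {i : Fin N} : i ∈ CC z k ↔ z ≤ i.val ∧ i.val < z + k := by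
  simp [CC]

lemma card_CC (hN : z + k + 1 = N) : (CC z k (N := N)).card = k := by
  have hinj : Function.Injective (fun m : Fin k => (⟨z + m.val, by omega⟩ : Fin N)) := by
    intro a b hab
    have h2 := congrArg Fin.val hab
    simp only [] at h2
    exact Fin.ext (by omega)
  have heq : CC z k (N := N) = Finset.univ.map ⟨_, hinj⟩ := by
    ext i
    simp only [mem_CC, Finset.mem_map, Finset.mem_univ, true_and, Function.Embedding.coeFn_mk]
    constructor
    · rintro ⟨h1, h2⟩
      refine ⟨⟨i.val - z, by omega⟩, Fin.ext ?_⟩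
      show z + (i.val - z) = i.val
      omega
    · rintro ⟨m, rfl⟩
      have := m.isLt
      constructor
      · show z ≤ z + m.val; omega
      · show z + m.val < z + k; omega
  rw [heq, Finset.card_map, Finset.card_univ, Fintype.card_fin]

def nn (hN : z + k + 1 = N) : Fin N := ⟨z + k, by omega⟩

def z0 (hN : z + k + 1 = N) : Fin N := ⟨0, by omega⟩

lemma nn_not_mem_CC (hN : z + k + 1 = N) : nn z k hN ∉ CC z k := by
  simp [mem_CC, nn]

lemma z0_not_mem_CC (hz : 0 < z) (hN : z + k + 1 = N) : z0 z k hN ∉ CC z k := by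
  simp [mem_CC, z0]; omega

lemma i_cases (hN : z + k + 1 = N) (i : Fin N) :
    i.val < z ∨ i ∈ CC z k ∨ i = nn z k hN := by
  rcases Nat.lt_or_ge i.val z with h | h
  · exact Or.inl h
  rcases Nat.lt_or_ge i.val (z + k) with h2 | h2
  · exact Or.inr (Or.inl (by rw [mem_CC]; exact ⟨h, h2⟩))
  · refine Or.inr (Or.inr (Fin.ext ?_))
    have := i.isLt
    simp only [nn]
    omega

variable (hN : z + k + 1 = N)

/-- the base point: `y` on `C`, the `j`-th diagonal on the `ω`-coordinates, `∞` at `nn`. -/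
def bpt (d : ∀ i : Fin N, ℕ ↪ (κ i).ord.ToType) (j : ℕ)
    (y : ∀ i : (CC z k (N := N)), (κ i.1).ord.ToType) : ∀ i, Alpha (κ i) :=
  fun i => if hC : i ∈ CC z k then OnePoint.some (y ⟨i, hC⟩)
    else if i.val < z then OnePoint.some (d i j) else ∞

/-- the point with `t` at coordinate `nn`. -/
def ppt (d : ∀ i : Fin N, ℕ ↪ (κ i).ord.ToType) (j : ℕ)
    (y : ∀ i : (CC z k (N := N)), (κ i.1).ord.ToType) (t : Alpha (κ (nn z k hN))) :
    ∀ i, Alpha (κ i) :=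
  Function.update (bpt z k κ d j y) (nn z k hN) t

/-- the corner point of `y` : `∞` off `C`. -/
def cpt (y : ∀ i : (CC z k (N := N)), (κ i.1).ord.ToType) : ∀ i, Alpha (κ i) :=
  fun i => if hC : i ∈ CC z k then OnePoint.some (y ⟨i, hC⟩) else ∞


/-- the singularity predicate. -/
def Ppred (d : ∀ i : Fin N, ℕ ↪ (κ i).ord.ToType)
    (Γ : ((∀ i : (CC z k (N := N)), (κ i.1).ord.ToType) × ℕ) ↪ (κ (nn z k hN)).ord.ToType)
    (x : ∀ i, Alpha (κ i)) : Prop :=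
  ∃ (j : ℕ) (y : ∀ i : (CC z k (N := N)), (κ i.1).ord.ToType),
    x = ppt z k κ hN d j y (OnePoint.some (Γ ⟨y, j⟩))

/-- the witnessing cocycle. -/
noncomputable def ff (d : ∀ i : Fin N, ℕ ↪ (κ i).ord.ToType)
    (Γ : ((∀ i : (CC z k (N := N)), (κ i.1).ord.ToType) × ℕ) ↪ (κ (nn z k hN)).ord.ToType) :
    Cochain κ := fun A x =>
  if (CC z k ⊆ A ∧ A.card = k + 1) ∧ Ppred z k κ hN d Γ x.1 then 1 else 0


/-- the face used for coordinate `i ∈ C`. -/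
def Bi (hN : z + k + 1 = N) (i : Fin N) : Finset (Fin N) :=
  insert (z0 z k hN) ((CC z k).erase i)

/-- the base point of the `i`-th face comparison. -/
def PBpt (d : ∀ i : Fin N, ℕ ↪ (κ i).ord.ToType) (i : Fin N) (j : ℕ)
    (y : ∀ i' : (CC z k (N := N)), (κ i'.1).ord.ToType) : ∀ i', Alpha (κ i') :=
  Function.update (bpt z k κ d j y) i ∞

variable {z k κ}
variable {d : ∀ i : Fin N, ℕ ↪ (κ i).ord.ToType} {j : ℕ}
  {y : ∀ i : (CC z k (N := N)), (κ i.1).ord.ToType} {t : Alpha (κ (nn z k hN))}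

lemma ppt_apply_nn : ppt z k κ hN d j y t (nn z k hN) = t :=
  Function.update_self _ _ _

lemma ppt_apply_C {i : Fin N} (hC : i ∈ CC z k) :
    ppt z k κ hN d j y t i = OnePoint.some (y ⟨i, hC⟩) := by
  rw [ppt, Function.update_of_ne (fun h => nn_not_mem_CC z k hN (by rw [← h]; exact hC)), bpt,
    dif_pos hC]

lemma ppt_apply_lt {i : Fin N} (hlt : i.val < z) :
    ppt z k κ hN d j y t i = OnePoint.some (d i j) := by
  have hne : i ≠ nn z k hN := by
    intro h; rw [h] at hlt; simp only [nn] at hlt; omega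
  have hC : i ∉ CC z k := by rw [mem_CC]; omega
  rw [ppt, Function.update_of_ne hne, bpt, dif_neg hC, if_pos hlt]

lemma cpt_apply_C {i : Fin N} (hC : i ∈ CC z k) :
    cpt z k κ y i = OnePoint.some (y ⟨i, hC⟩) := by
  rw [cpt, dif_pos hC]

lemma cpt_apply_not_C {i : Fin N} (hC : i ∉ CC z k) : cpt z k κ y i = ∞ := by
  rw [cpt, dif_neg hC]

lemma cpt_mem_DD : cpt z k κ y ∈ DD κ (CC z k) := by
  intro i hi
  rw [cpt_apply_C hi]
  exact OnePoint.coe_ne_infty _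

lemma ppt_coe_ne_infty {γ : (κ (nn z k hN)).ord.ToType} (i : Fin N) :
    ppt z k κ hN d j y (OnePoint.some γ) i ≠ ∞ := by
  rcases i_cases z k hN i with h | h | h
  · rw [ppt_apply_lt hN h]; exact OnePoint.coe_ne_infty _
  · rw [ppt_apply_C hN h]; exact OnePoint.coe_ne_infty _
  · rw [h, ppt_apply_nn]; exact OnePoint.coe_ne_infty _

lemma ppt_mem_DD {γ : (κ (nn z k hN)).ord.ToType} {A : Finset (Fin N)} :
    ppt z k κ hN d j y (OnePoint.some γ) ∈ DD κ A :=
  fun i _ => ppt_coe_ne_infty hN i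

lemma ppt_infty_mem_DD (hz : 0 < z) {A : Finset (Fin N)}
    (hA : A ⊆ insert (z0 z k hN) (CC z k)) :
    ppt z k κ hN d j y ∞ ∈ DD κ A := by
  intro i hi
  rcases Finset.mem_insert.1 (hA hi) with h | h
  · subst h
    rw [ppt_apply_lt hN (by simp [z0]; omega)]
    exact OnePoint.coe_ne_infty _
  · rw [ppt_apply_C hN h]
    exact OnePoint.coe_ne_infty _


variable {Γ : ((∀ i : (CC z k (N := N)), (κ i.1).ord.ToType) × ℕ) ↪ (κ (nn z k hN)).ord.ToType}

lemma ff_apply_of_P {A : Finset (Fin N)} (hCA : CC z k ⊆ A) (hAcard : A.card = k + 1)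
    {x : ↥(DD κ A)} (hP : Ppred z k κ hN d Γ x.1) : ff z k κ hN d Γ A x = 1 :=
  if_pos ⟨⟨hCA, hAcard⟩, hP⟩

lemma ff_apply_of_not_P {A : Finset (Fin N)} {x : ↥(DD κ A)}
    (hP : ¬ Ppred z k κ hN d Γ x.1) : ff z k κ hN d Γ A x = 0 :=
  if_neg (fun h => hP h.2)

lemma ff_cocycle_sum (hk : 0 < k) {A : Finset (Fin N)} (hA : A.card = k + 2)
    (x : ↥(DD κ A)) : cb κ (ff z k κ hN d Γ) A x = 0 := by
  rw [cb]
  by_cases hCA : CC z k ⊆ A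
  · have hsplit : ∀ i ∈ A, res (Finset.erase_subset i A) (ff z k κ hN d Γ (A.erase i)) x
        = if i ∉ CC z k ∧ Ppred z k κ hN d Γ x.1 then 1 else 0 := by
      intro i hi
      by_cases hiC : i ∈ CC z k
      · have h1 : ¬ (CC z k ⊆ A.erase i) := fun hsub =>
          (Finset.notMem_erase i A) (hsub hiC)
        simp only [res, ff]
        rw [if_neg (fun h => h1 h.1.1), if_neg (fun h => h.1 hiC)]
      · have h1 : CC z k ⊆ A.erase i := fun c hc =>
          Finset.mem_erase.2 ⟨fun hci => hiC (hci ▸ hc), hCA hc⟩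
        have h2 : (A.erase i).card = k + 1 := by
          rw [Finset.card_erase_of_mem hi, hA]
          omega
        simp only [res, ff]
        by_cases hP : Ppred z k κ hN d Γ x.1
        · rw [if_pos ⟨⟨h1, h2⟩, hP⟩, if_pos ⟨hiC, hP⟩]
        · rw [if_neg (fun h => hP h.2), if_neg (fun h => hP h.2)]
    rw [Finset.sum_congr rfl hsplit]
    by_cases hP : Ppred z k κ hN d Γ x.1
    · have hsplit2 : ∀ i ∈ A, (if i ∉ CC z k ∧ Ppred z k κ hN d Γ x.1 then (1 : ZMod 2) else 0)
          = if i ∈ A \ CC z k then 1 else 0 := by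
        intro i hi
        by_cases hiC : i ∈ CC z k
        · rw [if_neg (fun h => h.1 hiC), if_neg (by simp [hiC])]
        · rw [if_pos ⟨hiC, hP⟩, if_pos (Finset.mem_sdiff.2 ⟨hi, hiC⟩)]
      rw [Finset.sum_congr rfl hsplit2, Finset.sum_ite_mem]
      have hcap : A ∩ (A \ CC z k) = A \ CC z k := by
        apply Finset.inter_eq_right.2
        exact Finset.sdiff_subset
      rw [hcap, Finset.sum_const]
      have hcard2 : (A \ CC z k).card = 2 := by
        rw [Finset.card_sdiff_of_subset hCA, hA, card_CC z k hN]
        omega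
      rw [hcard2]
      decide
    · have : ∀ i ∈ A, (if i ∉ CC z k ∧ Ppred z k κ hN d Γ x.1 then (1 : ZMod 2) else 0) = 0 :=
        fun i _ => if_neg (fun h => hP h.2)
      rw [Finset.sum_congr rfl this, Finset.sum_const, smul_zero]
  · have : ∀ i ∈ A, res (Finset.erase_subset i A) (ff z k κ hN d Γ (A.erase i)) x = 0 := by
      intro i hi
      simp only [res, ff]
      exact if_neg (fun h => hCA (h.1.1.trans (Finset.erase_subset i A)))
    rw [Finset.sum_congr rfl this, Finset.sum_const, smul_zero]


lemma isOpen_P_and_compl {A : Finset (Fin N)} (hCA : CC z k ⊆ A) (hAcard : A.card = k + 1) :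
    IsOpen {x : ↥(DD κ A) | Ppred z k κ hN d Γ x.1}
    ∧ IsOpen {x : ↥(DD κ A) | ¬ Ppred z k κ hN d Γ x.1} := by
  constructor
  · rw [isOpen_iff_forall_mem_open]
    rintro x hx
    refine ⟨Subtype.val ⁻¹' BoxSet κ x.1 (fun _ => ∅), ?_,
      (isOpen_BoxSet x.1 _ (fun i => Set.finite_empty)).preimage continuous_subtype_val,
      mem_BoxSet_self _ _⟩
    intro x' hx'
    have hxeq : x'.1 = x.1 := by
      funext i
      obtain ⟨jw, yw, hxy⟩ := hx
      refine eq_on_of_mem_BoxSet hx' ?_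
      rw [hxy]
      exact ppt_coe_ne_infty hN i
    show Ppred z k κ hN d Γ x'.1
    rw [hxeq]
    exact hx
  · rw [isOpen_iff_forall_mem_open]
    rintro x hnP
    obtain ⟨j', hj'C, hAeq⟩ : ∃ a ∉ CC z k, insert a (CC z k) = A :=
      Finset.exists_eq_insert_iff.2 ⟨hCA, by rw [card_CC z k hN, hAcard]⟩
    set FIN : Set (∀ i, Alpha (κ i)) :=
      {q | Ppred z k κ hN d Γ q ∧ ∀ i ∈ A, q i = x.1 i} with hFINdef
    have hsub : FIN.Subsingleton := by
      rintro q1 ⟨⟨j1, y1, rfl⟩, hag1⟩ q2 ⟨⟨j2, y2, rfl⟩, hag2⟩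
      have hy : y1 = y2 := by
        funext i
        have h1 := hag1 i.1 (hCA i.2)
        have h2 := hag2 i.1 (hCA i.2)
        rw [ppt_apply_C hN i.2] at h1 h2
        exact OnePoint.coe_injective (h1.trans h2.symm)
      subst hy
      have hj'mem : j' ∈ A := by rw [← hAeq]; exact Finset.mem_insert_self _ _
      have hj : j1 = j2 := by
        rcases i_cases z k hN j' with hlt | hC | hnn
        · have h1 := hag1 j' hj'mem
          have h2 := hag2 j' hj'mem
          rw [ppt_apply_lt hN hlt] at h1 h2
          exact (d j').injective (OnePoint.coe_injective (h1.trans h2.symm))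
        · exact absurd hC hj'C
        · subst hnn
          have h1 := hag1 _ hj'mem
          have h2 := hag2 _ hj'mem
          rw [ppt_apply_nn] at h1 h2
          have := Γ.injective (OnePoint.coe_injective (h1.trans h2.symm))
          exact congrArg Prod.snd this
      subst hj
      rfl
    have hFIN : FIN.Finite := hsub.finite
    set E : ∀ i, Set ((κ i).ord.ToType) :=
      fun i => OnePoint.some ⁻¹' ((fun q => q i) '' FIN) with hEdef
    have hE : ∀ i, (E i).Finite := fun i =>
      ((hFIN.image _).preimage OnePoint.coe_injective.injOn)
    refine ⟨Subtype.val ⁻¹' BoxSet κ x.1 E, ?_,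
      (isOpen_BoxSet _ _ hE).preimage continuous_subtype_val, mem_BoxSet_self _ _⟩
    intro x' hx'
    show ¬ Ppred z k κ hN d Γ x'.1
    intro hP
    have hqFIN : x'.1 ∈ FIN := ⟨hP, fun i hi => eq_on_of_mem_BoxSet hx' (x.2 i hi)⟩
    have hne : x'.1 ≠ x.1 := fun h => hnP (show Ppred z k κ hN d Γ x.1 from h ▸ hP)
    obtain ⟨i, hi⟩ := Function.ne_iff.1 hne
    by_cases hinf : x.1 i = ∞
    · obtain ⟨j1, y1, hq⟩ := hP
      have hcoe : x'.1 i ≠ ∞ := by rw [hq]; exact ppt_coe_ne_infty hN i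
      have ht := (coe_untop _ hcoe).symm
      exact not_mem_E_of_mem_BoxSet hx' hinf ht ⟨x'.1, hqFIN, ht⟩
    · exact hi (eq_on_of_mem_BoxSet hx' hinf)

lemma ff_isCochain : IsCochain κ k (ff z k κ hN d Γ) := by
  intro A hA
  by_cases hCA : CC z k ⊆ A
  · have heq : ff z k κ hN d Γ A = fun x => if Ppred z k κ hN d Γ x.1 then 1 else 0 :=
      funext fun x => by
        by_cases hP : Ppred z k κ hN d Γ x.1
        · rw [ff, if_pos ⟨⟨hCA, hA⟩, hP⟩, if_pos hP]
        · rw [ff, if_neg (fun h => hP h.2), if_neg hP]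
    rw [heq]
    obtain ⟨h1, h2⟩ := isOpen_P_and_compl hN hCA hA
    exact continuous_ite_indicator h1 h2
  · have heq : ff z k κ hN d Γ A = fun _ => 0 :=
      funext fun x => if_neg (fun h => hCA h.1.1)
    rw [heq]
    exact continuous_const


lemma bpt_apply_C {i : Fin N} (hC : i ∈ CC z k) :
    bpt z k κ d j y i = OnePoint.some (y ⟨i, hC⟩) := dif_pos hC

lemma bpt_apply_lt {i : Fin N} (hlt : i.val < z) :
    bpt z k κ d j y i = OnePoint.some (d i j) := by
  have hC : i ∉ CC z k := by rw [mem_CC]; omega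
  rw [bpt, dif_neg hC, if_pos hlt]

lemma bpt_apply_nn (hz : 0 < z) : bpt z k κ d j y (nn z k hN) = ∞ := by
  have hC : nn z k hN ∉ CC z k := nn_not_mem_CC z k hN
  rw [bpt, dif_neg hC, if_neg (by simp only [nn]; omega)]

lemma z0_ne_of_mem_CC (hz : 0 < z) {i : Fin N} (hC : i ∈ CC z k) : z0 z k hN ≠ i := by
  intro h
  exact z0_not_mem_CC z k hz hN (h ▸ hC)

lemma card_Bi (hz : 0 < z) (hk : 0 < k) {i : Fin N} (hC : i ∈ CC z k) :
    (Bi z k hN i).card = k := by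
  rw [Bi, Finset.card_insert_of_notMem
    (fun hmem => z0_not_mem_CC z k hz hN (Finset.erase_subset _ _ hmem)),
    Finset.card_erase_of_mem hC, card_CC z k hN]
  omega

lemma Bi_subset {i : Fin N} : Bi z k hN i ⊆ insert (z0 z k hN) (CC z k) :=
  Finset.insert_subset_insert _ (Finset.erase_subset _ _)

lemma PBpt_apply_self {i : Fin N} : PBpt z k κ d i j y i = ∞ :=
  Function.update_self _ _ _

lemma PBpt_apply_ne {i i' : Fin N} (h : i' ≠ i) :
    PBpt z k κ d i j y i' = bpt z k κ d j y i' :=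
  Function.update_of_ne h _ _

lemma PBpt_mem (hz : 0 < z) {i : Fin N} (hC : i ∈ CC z k) :
    PBpt z k κ d i j y ∈ DD κ (Bi z k hN i) := by
  intro i' hi'
  rcases Finset.mem_insert.1 hi' with h | h
  · subst h
    rw [PBpt_apply_ne (z0_ne_of_mem_CC hN hz hC), bpt_apply_lt (by simp [z0]; omega)]
    exact OnePoint.coe_ne_infty _
  · obtain ⟨hne, hmem⟩ := Finset.mem_erase.1 h
    rw [PBpt_apply_ne hne, bpt_apply_C hmem]
    exact OnePoint.coe_ne_infty _

lemma g_congr (g : Cochain κ) {B B' : Finset (Fin N)} (h : B = B') {x : ∀ i, Alpha (κ i)}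
    (hx : x ∈ DD κ B) (hx' : x ∈ DD κ B') : g B ⟨x, hx⟩ = g B' ⟨x, hx'⟩ := by
  subst h
  rfl

lemma ff_not_coboundary (hz : 0 < z) (hk : 0 < k)
    (h1 : ∀ i : Fin N, z ≤ i.val → ℵ₀ < κ i)
    (h2 : ∀ i i' : Fin N, z ≤ i.val → i < i' → κ i < κ i') :
    ¬ IsCoboundary κ k (ff z k κ hN d Γ) := by
  rintro ⟨g, hgcont, hgeq⟩
  have hgB : ∀ B : Finset (Fin N), B.card = k → Continuous (g B) := by
    intro B hB
    exact hgcont B (by omega)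
  -- finite exceptional sets for the faces `Bi i`
  have H2 : ∀ (i : (CC z k (N := N))) (jx : ℕ)
      (y' : ∀ i' : (CC z k (N := N)), (κ i'.1).ord.ToType),
      ∃ F : ∀ i', Set ((κ i').ord.ToType), (∀ i', (F i').Finite) ∧
        ∀ x (hx : x ∈ DD κ (Bi z k hN i.1)),
          (∀ i', x i' = PBpt z k κ d i.1 jx y' i' ∨
            (PBpt z k κ d i.1 jx y' i' = ∞ ∧ ∀ t, x i' = OnePoint.some t → t ∉ F i')) →
          g (Bi z k hN i.1) ⟨x, hx⟩
            = g (Bi z k hN i.1) ⟨PBpt z k κ d i.1 jx y', PBpt_mem hN hz i.2⟩ := by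
    intro i jx y'
    exact box_const (hgB _ (card_Bi hN hz hk i.2)) _ (PBpt_mem hN hz i.2)
  choose F hFfin hFspec using H2
  -- default element and normalization
  have hTne : ∀ i' : (CC z k (N := N)), Nonempty ((κ i'.1).ord.ToType) := by
    intro i'
    apply Cardinal.mk_ne_zero_iff.1
    rw [Cardinal.mk_ord_toType]
    exact ne_of_gt (lt_trans Cardinal.aleph0_pos (h1 i'.1 ((mem_CC z k).1 i'.2).1))
  have v0 : ∀ i' : (CC z k (N := N)), (κ i'.1).ord.ToType := fun i' => Classical.choice (hTne i')
  set normY : ∀ (i : (CC z k (N := N))),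
      (∀ i' : (CC z k (N := N)), (κ i'.1).ord.ToType) → (∀ i' : (CC z k (N := N)), (κ i'.1).ord.ToType) :=
    fun i y' => Function.update y' i (v0 i) with hnormYdef
  -- the order iso enumerating C
  set e := (CC z k (N := N)).orderIsoOfFin (card_CC z k hN) with hedef
  set Φ := Equiv.piCongrLeft (fun i' : (CC z k (N := N)) => (κ i'.1).ord.ToType) e.toEquiv with hΦdef
  -- the bad sets
  set Badτ : ∀ a : Fin k, (∀ b : Fin k, (κ ((e b) : Fin N)).ord.ToType) →
      Set ((κ ((e a) : Fin N)).ord.ToType) :=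
    fun a yb => {v | ∃ jx : ℕ,
      v ∈ F (e a) jx (normY (e a) (Φ yb)) ((e a) : Fin N) ∨
      Γ ⟨Function.update (Φ yb) (e a) v, jx⟩
        ∈ F (e a) jx (normY (e a) (Φ yb)) (nn z k hN)} with hBadτdef
  have hΦagree : ∀ (a : Fin k) (y1 y2 : ∀ b : Fin k, (κ ((e b) : Fin N)).ord.ToType),
      (∀ b, b ≠ a → y1 b = y2 b) → ∀ i', i' ≠ e a → Φ y1 i' = Φ y2 i' := by
    intro a y1 y2 hag i' hne
    have hb : e.symm i' ≠ a := by
      intro h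
      exact hne (by rw [← e.apply_symm_apply i', h])
    have heq : i' = e (e.symm i') := (e.apply_symm_apply i').symm
    rw [heq]
    exact (Equiv.piCongrLeft_apply_apply (fun i'' : (CC z k (N := N)) => (κ i''.1).ord.ToType)
        e.toEquiv y1 (e.symm i')).trans
      ((hag _ hb).trans (Equiv.piCongrLeft_apply_apply
        (fun i'' : (CC z k (N := N)) => (κ i''.1).ord.ToType) e.toEquiv y2 (e.symm i')).symm)
  have hBadcnt : ∀ (a : Fin k) (yb : ∀ b : Fin k, (κ ((e b) : Fin N)).ord.ToType),
      (Badτ a yb).Countable := by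
    intro a yb
    have hinj : ∀ jx : ℕ, Function.Injective
        (fun v : (κ ((e a) : Fin N)).ord.ToType => Γ ⟨Function.update (Φ yb) (e a) v, jx⟩) := by
      intro jx v w h
      have h2 := congrArg Prod.fst (Γ.injective h)
      have h3 := congrFun h2 (e a)
      simpa [Function.update_self] using h3
    have hset : Badτ a yb = ⋃ jx : ℕ,
        (F (e a) jx (normY (e a) (Φ yb)) ((e a) : Fin N) ∪
          (fun v => Γ ⟨Function.update (Φ yb) (e a) v, jx⟩) ⁻¹'
            (F (e a) jx (normY (e a) (Φ yb)) (nn z k hN))) := by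
      ext v
      simp only [hBadτdef, Set.mem_setOf_eq, Set.mem_iUnion, Set.mem_union, Set.mem_preimage]
    rw [hset]
    exact Set.countable_iUnion fun jx =>
      ((hFfin _ _ _ _).countable.union (((hFfin _ _ _ _).preimage (hinj jx).injOn).countable))
  have hdepτ : ∀ (a : Fin k) (y1 y2 : ∀ b : Fin k, (κ ((e b) : Fin N)).ord.ToType),
      (∀ b, b ≠ a → y1 b = y2 b) → Badτ a y1 = Badτ a y2 := by
    intro a y1 y2 hag
    have hnorm : normY (e a) (Φ y1) = normY (e a) (Φ y2) := by
      funext i''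
      simp only [hnormYdef]
      by_cases h : i'' = e a
      · subst h; rw [Function.update_self, Function.update_self]
      · rw [Function.update_of_ne h, Function.update_of_ne h, hΦagree a y1 y2 hag i'' h]
    have hupd : Function.update (Φ y1) (e a) = Function.update (Φ y2) (e a) := by
      funext v i''
      by_cases h : i'' = e a
      · subst h; rw [Function.update_self, Function.update_self]
      · rw [Function.update_of_ne h, Function.update_of_ne h, hΦagree a y1 y2 hag i'' h]
    simp only [hBadτdef, hnorm, hupd]
  obtain ⟨yb, hyb⟩ := avoid k (fun b => (κ ((e b) : Fin N)).ord.ToType)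
    (fun a => by rw [Cardinal.mk_ord_toType]; exact h1 _ ((mem_CC z k).1 (e a).2).1)
    (fun a b hab => by
      rw [Cardinal.mk_ord_toType, Cardinal.mk_ord_toType]
      exact h2 _ _ ((mem_CC z k).1 (e a).2).1 (Subtype.coe_lt_coe.2 (e.lt_iff_lt.2 hab)))
    Badτ hBadcnt hdepτ
  set ystar := Φ yb with hystardef
  have hYkey : ∀ (a : Fin k) (jx : ℕ),
      ystar (e a) ∉ F (e a) jx (normY (e a) ystar) ((e a) : Fin N) ∧
      Γ ⟨ystar, jx⟩ ∉ F (e a) jx (normY (e a) ystar) (nn z k hN) := by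
    intro a jx
    have ha := hyb a
    simp only [hBadτdef, Set.mem_setOf_eq, not_exists, not_or] at ha
    have ha2 := ha jx
    have hye : ystar (e a) = yb a := Equiv.piCongrLeft_apply_apply _ _ _ _
    constructor
    · intro hmem
      rw [hye] at hmem
      exact ha2.1 hmem
    · intro hmem
      apply ha2.2
      have hupd : Function.update ystar (e a) (yb a) = ystar := by
        rw [← hye]
        exact Function.update_eq_self _ _
      rw [hupd]
      exact hmem
  -- the corner point exceptional sets
  obtain ⟨Fc, hFcfin, hFcspec⟩ :=
    box_const (hgB (CC z k) (card_CC z k hN)) (cpt z k κ ystar) cpt_mem_DD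
  -- choice of j*
  set Jbad : Set ℕ := {jx | (∃ i' : Fin N, i'.val < z ∧ d i' jx ∈ Fc i') ∨
    Γ ⟨ystar, jx⟩ ∈ Fc (nn z k hN)} with hJdef
  have hJfin : Jbad.Finite := by
    have hJsub : Jbad ⊆ (⋃ i' : Fin N, {jx | d i' jx ∈ Fc i'}) ∪
        ((fun jx => Γ ⟨ystar, jx⟩) ⁻¹' (Fc (nn z k hN))) := by
      rintro jx (⟨i', _, hmem⟩ | hmem)
      · exact Or.inl (Set.mem_iUnion.2 ⟨i', hmem⟩)
      · exact Or.inr hmem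
    refine Set.Finite.subset ?_ hJsub
    refine Set.Finite.union (Set.finite_iUnion fun i' => ?_) ?_
    · exact (hFcfin i').preimage (d i').injective.injOn
    · refine (hFcfin _).preimage (Function.Injective.injOn ?_)
      intro jx1 jx2 h
      exact congrArg Prod.snd (Γ.injective h)
  obtain ⟨jst, hjst⟩ := hJfin.infinite_compl.nonempty
  have hj1 : ∀ i' : Fin N, i'.val < z → d i' jst ∉ Fc i' := by
    intro i' hlt hmem
    exact hjst (Or.inl ⟨i', hlt, hmem⟩)
  have hj2 : Γ ⟨ystar, jst⟩ ∉ Fc (nn z k hN) := fun hmem => hjst (Or.inr hmem)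
  -- the two comparison points
  set Astar : Finset (Fin N) := insert (z0 z k hN) (CC z k) with hAstardef
  have hAcard : Astar.card = k + 1 := by
    rw [hAstardef, Finset.card_insert_of_notMem (z0_not_mem_CC z k hz hN), card_CC z k hN]
  set x1 : ∀ i', Alpha (κ i') := ppt z k κ hN d jst ystar (OnePoint.some (Γ ⟨ystar, jst⟩)) with hx1def
  set x2 : ∀ i', Alpha (κ i') := ppt z k κ hN d jst ystar ∞ with hx2def
  have hx1A : x1 ∈ DD κ Astar := ppt_mem_DD hN
  have hx2A : x2 ∈ DD κ Astar := ppt_infty_mem_DD hN hz (le_refl _)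
  have hx1CC : x1 ∈ DD κ (CC z k) := ppt_mem_DD hN
  have hx2CC : x2 ∈ DD κ (CC z k) := ppt_infty_mem_DD hN hz (Finset.subset_insert _ _)
  -- corner agreements
  have hagree1 : ∀ i', x1 i' = cpt z k κ ystar i' ∨
      (cpt z k κ ystar i' = ∞ ∧ ∀ t, x1 i' = OnePoint.some t → t ∉ Fc i') := by
    intro i'
    rcases i_cases z k hN i' with hlt | hC | hnn
    · refine Or.inr ⟨cpt_apply_not_C (by rw [mem_CC]; omega), ?_⟩
      intro t ht
      rw [hx1def, ppt_apply_lt hN hlt] at ht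
      have := OnePoint.coe_injective ht.symm
      rw [this]
      exact hj1 i' hlt
    · exact Or.inl (by rw [hx1def, ppt_apply_C hN hC, cpt_apply_C hC])
    · subst hnn
      refine Or.inr ⟨cpt_apply_not_C (nn_not_mem_CC z k hN), ?_⟩
      intro t ht
      rw [hx1def, ppt_apply_nn] at ht
      have := OnePoint.coe_injective ht.symm
      rw [this]
      exact hj2
  have hagree2 : ∀ i', x2 i' = cpt z k κ ystar i' ∨
      (cpt z k κ ystar i' = ∞ ∧ ∀ t, x2 i' = OnePoint.some t → t ∉ Fc i') := by
    intro i'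
    rcases i_cases z k hN i' with hlt | hC | hnn
    · refine Or.inr ⟨cpt_apply_not_C (by rw [mem_CC]; omega), ?_⟩
      intro t ht
      rw [hx2def, ppt_apply_lt hN hlt] at ht
      have := OnePoint.coe_injective ht.symm
      rw [this]
      exact hj1 i' hlt
    · exact Or.inl (by rw [hx2def, ppt_apply_C hN hC, cpt_apply_C hC])
    · subst hnn
      exact Or.inl (by rw [hx2def, ppt_apply_nn, cpt_apply_not_C (nn_not_mem_CC z k hN)])
  -- the contradiction
  have hterm : ∀ i ∈ Astar,
      res (Finset.erase_subset i Astar) (g (Astar.erase i)) ⟨x1, hx1A⟩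
        = res (Finset.erase_subset i Astar) (g (Astar.erase i)) ⟨x2, hx2A⟩ := by
    intro i hi
    simp only [res]
    rcases Finset.mem_insert.1 hi with hiz | hiC
    · subst hiz
      have hBeq : Astar.erase (z0 z k hN) = CC z k :=
        Finset.erase_insert (z0_not_mem_CC z k hz hN)
      exact (g_congr g hBeq _ hx1CC).trans
        (((hFcspec x1 hx1CC hagree1).trans (hFcspec x2 hx2CC hagree2).symm).trans
          (g_congr g hBeq _ hx2CC).symm)
    · obtain ⟨aa, haa⟩ : ∃ aa : Fin k, ((e aa : (CC z k (N := N))) : Fin N) = i :=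
        ⟨e.symm ⟨i, hiC⟩, congrArg Subtype.val (e.apply_symm_apply _)⟩
      subst haa
      have hBeq : Astar.erase ((e aa : (CC z k (N := N))) : Fin N)
          = Bi z k hN ((e aa : (CC z k (N := N))) : Fin N) := by
        rw [hAstardef, Bi, Finset.erase_insert_of_ne (z0_ne_of_mem_CC hN hz hiC)]
      have hx1Bi : x1 ∈ DD κ (Bi z k hN ((e aa : (CC z k (N := N))) : Fin N)) := ppt_mem_DD hN
      have hx2Bi : x2 ∈ DD κ (Bi z k hN ((e aa : (CC z k (N := N))) : Fin N)) :=
        ppt_infty_mem_DD hN hz (Bi_subset hN)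
      -- face agreements
      have hagF1 : ∀ i', x1 i' = PBpt z k κ d ((e aa : (CC z k (N := N))) : Fin N) jst (normY (e aa) ystar) i' ∨
          (PBpt z k κ d ((e aa : (CC z k (N := N))) : Fin N) jst (normY (e aa) ystar) i' = ∞ ∧
            ∀ t, x1 i' = OnePoint.some t → t ∉ F (e aa) jst (normY (e aa) ystar) i') := by
        intro i'
        by_cases hia : i' = ((e aa : (CC z k (N := N))) : Fin N)
        · subst hia
          refine Or.inr ⟨PBpt_apply_self, ?_⟩
          intro t ht
          rw [hx1def, ppt_apply_C hN hiC] at ht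
          have := OnePoint.coe_injective ht.symm
          rw [this]
          exact (hYkey aa jst).1
        · rcases i_cases z k hN i' with hlt | hC | hnn
          · exact Or.inl (by
              rw [hx1def, ppt_apply_lt hN hlt, PBpt_apply_ne hia, bpt_apply_lt hlt])
          · refine Or.inl ?_
            rw [hx1def, ppt_apply_C hN hC, PBpt_apply_ne hia, bpt_apply_C hC]
            have hsubne : (⟨i', hC⟩ : (CC z k (N := N))) ≠ e aa :=
              fun h => hia (congrArg Subtype.val h)
            simp only [hnormYdef]
            rw [Function.update_of_ne hsubne]
          · subst hnn
            refine Or.inr ⟨?_, ?_⟩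
            · rw [PBpt_apply_ne hia, bpt_apply_nn hN hz]
            · intro t ht
              rw [hx1def, ppt_apply_nn] at ht
              have := OnePoint.coe_injective ht.symm
              rw [this]
              exact (hYkey aa jst).2
      have hagF2 : ∀ i', x2 i' = PBpt z k κ d ((e aa : (CC z k (N := N))) : Fin N) jst (normY (e aa) ystar) i' ∨
          (PBpt z k κ d ((e aa : (CC z k (N := N))) : Fin N) jst (normY (e aa) ystar) i' = ∞ ∧
            ∀ t, x2 i' = OnePoint.some t → t ∉ F (e aa) jst (normY (e aa) ystar) i') := by
        intro i'
        by_cases hia : i' = ((e aa : (CC z k (N := N))) : Fin N)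
        · subst hia
          refine Or.inr ⟨PBpt_apply_self, ?_⟩
          intro t ht
          rw [hx2def, ppt_apply_C hN hiC] at ht
          have := OnePoint.coe_injective ht.symm
          rw [this]
          exact (hYkey aa jst).1
        · rcases i_cases z k hN i' with hlt | hC | hnn
          · exact Or.inl (by
              rw [hx2def, ppt_apply_lt hN hlt, PBpt_apply_ne hia, bpt_apply_lt hlt])
          · refine Or.inl ?_
            rw [hx2def, ppt_apply_C hN hC, PBpt_apply_ne hia, bpt_apply_C hC]
            have hsubne : (⟨i', hC⟩ : (CC z k (N := N))) ≠ e aa :=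
              fun h => hia (congrArg Subtype.val h)
            simp only [hnormYdef]
            rw [Function.update_of_ne hsubne]
          · subst hnn
            exact Or.inl (by rw [hx2def, ppt_apply_nn, PBpt_apply_ne hia, bpt_apply_nn hN hz])
      exact (g_congr g hBeq _ hx1Bi).trans
        (((hFspec (e aa) jst (normY (e aa) ystar) x1 hx1Bi hagF1).trans
          (hFspec (e aa) jst (normY (e aa) ystar) x2 hx2Bi hagF2).symm).trans
          (g_congr g hBeq _ hx2Bi).symm)
  have hP1 : Ppred z k κ hN d Γ x1 := ⟨jst, ystar, rfl⟩
  have hP2 : ¬ Ppred z k κ hN d Γ x2 := by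
    rintro ⟨j1, y1, hq⟩
    have := congrFun hq (nn z k hN)
    rw [hx2def, ppt_apply_nn, ppt_apply_nn] at this
    exact OnePoint.coe_ne_infty _ this.symm
  have e1 : cb κ g Astar ⟨x1, hx1A⟩ = 1 := by
    rw [← hgeq Astar hAcard ⟨x1, hx1A⟩]
    exact ff_apply_of_P hN (Finset.subset_insert _ _) hAcard hP1
  have e2 : cb κ g Astar ⟨x2, hx2A⟩ = 0 := by
    rw [← hgeq Astar hAcard ⟨x2, hx2A⟩]
    exact ff_apply_of_not_P hN hP2
  have : (1 : ZMod 2) = 0 := by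
    calc (1 : ZMod 2) = cb κ g Astar ⟨x1, hx1A⟩ := e1.symm
      _ = cb κ g Astar ⟨x2, hx2A⟩ := by
          rw [cb, cb]
          exact Finset.sum_congr rfl hterm
      _ = 0 := e2
  exact absurd this (by decide)

lemma exists_Gamma (hk : 0 < k) (h1 : ∀ i : Fin N, z ≤ i.val → ℵ₀ < κ i)
    (h2 : ∀ i i' : Fin N, z ≤ i.val → i < i' → κ i < κ i') :
    Nonempty (((∀ i : (CC z k (N := N)), (κ i.1).ord.ToType) × ℕ)
      ↪ (κ (nn z k hN)).ord.ToType) := by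
  apply (Cardinal.le_def _ _).1
  set maxC : Fin N := ⟨z + k - 1, by omega⟩ with hmaxCdef
  have hmaxmem : z ≤ maxC.val := by simp [hmaxCdef]; omega
  have hmaxinf : ℵ₀ ≤ κ maxC := le_of_lt (h1 _ hmaxmem)
  have hle : ∀ i : (CC z k (N := N)), κ i.1 ≤ κ maxC := by
    intro i
    obtain ⟨hz1, hz2⟩ := (mem_CC z k).1 i.2
    by_cases hiv : i.1 = maxC
    · rw [hiv]
    · refine le_of_lt (h2 i.1 maxC hz1 ?_)
      rw [Fin.lt_def]
      have : i.1.val ≠ maxC.val := fun h => hiv (Fin.ext h)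
      simp only [hmaxCdef] at this ⊢
      omega
  have hpile : #(∀ i : (CC z k (N := N)), (κ i.1).ord.ToType) ≤ κ maxC := by
    calc #(∀ i : (CC z k (N := N)), (κ i.1).ord.ToType)
        = Cardinal.prod (fun i : (CC z k (N := N)) => κ i.1) := by
          rw [Cardinal.mk_pi]
          congr 1
          funext i
          rw [Cardinal.mk_ord_toType]
      _ ≤ Cardinal.prod (fun _ : (CC z k (N := N)) => κ maxC) :=
          Cardinal.prod_le_prod _ _ hle
      _ = κ maxC ^ #(CC z k (N := N)) := Cardinal.prod_const' _ _
      _ = κ maxC ^ (k : Cardinal) := by rw [Cardinal.mk_coe_finset, card_CC z k hN]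
      _ = κ maxC ^ (k : ℕ) := Cardinal.power_natCast _ _
      _ = κ maxC := Cardinal.power_nat_eq hmaxinf hk
  have hlt : κ maxC < κ (nn z k hN) := by
    refine h2 maxC (nn z k hN) hmaxmem ?_
    rw [Fin.lt_def]
    simp only [hmaxCdef, nn]
    omega
  calc #((∀ i : (CC z k (N := N)), (κ i.1).ord.ToType) × ℕ)
      = #(∀ i : (CC z k (N := N)), (κ i.1).ord.ToType) * ℵ₀ := by
        rw [Cardinal.mk_prod]
        simp
    _ ≤ κ maxC * ℵ₀ := mul_le_mul_left hpile _
    _ = κ maxC := Cardinal.mul_aleph0_eq hmaxinf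
    _ ≤ #((κ (nn z k hN)).ord.ToType) := by
        rw [Cardinal.mk_ord_toType]
        exact le_of_lt hlt

end Main

lemma main_lemma {N : ℕ} (z k : ℕ) (hz : 0 < z) (hk : 0 < k) (hN : z + k + 1 = N)
    (κ : Fin N → Cardinal)
    (h0 : ∀ i : Fin N, i.val < z → κ i = ℵ₀)
    (h1 : ∀ i : Fin N, z ≤ i.val → ℵ₀ < κ i)
    (h2 : ∀ i i' : Fin N, z ≤ i.val → i < i' → κ i < κ i') :
    ∃ f : Cochain κ, IsCocycle κ k f ∧ ¬ IsCoboundary κ k f := by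
  have hinf : ∀ i : Fin N, Infinite ((κ i).ord.ToType) := by
    intro i
    rw [Cardinal.infinite_iff, Cardinal.mk_ord_toType]
    rcases Nat.lt_or_ge i.val z with h | h
    · rw [h0 i h]
    · exact le_of_lt (h1 i h)
  have d : ∀ i : Fin N, ℕ ↪ (κ i).ord.ToType := fun i => @Infinite.natEmbedding _ (hinf i)
  obtain ⟨Γ⟩ := exists_Gamma hN hk h1 h2
  refine ⟨ff z k κ hN d Γ, ⟨ff_isCochain hN, fun A hA x => ff_cocycle_sum hN hk hA x⟩,
    ff_not_coboundary hN hz hk h1 h2⟩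

theorem stmt19' (z k : ℕ) (hz : 0 < z) (hk : 0 < k)
    (κ : Fin (z + k + 1) → Cardinal)
    (h0 : ∀ i : Fin (z + k + 1), (i : ℕ) < z → κ i = ℵ₀)
    (h1 : ∀ i : Fin (z + k + 1), z ≤ (i : ℕ) → ℵ₀ < κ i)
    (h2 : ∀ i j : Fin (z + k + 1), z ≤ (i : ℕ) → i < j → κ i < κ j) :
    (∃ f : Cochain κ, IsCocycle κ k f ∧ ¬ IsCoboundary κ k f) ∧
    ∀ n : ℕ, 1 ≤ n → ∀ μ : Fin (n + 2) → Cardinal,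
      (∀ i : Fin (n + 2), μ i = Cardinal.aleph (i : ℕ)) →
      ∃ f : Cochain μ, IsCocycle μ n f ∧ ¬ IsCoboundary μ n f := by
  constructor
  · exact main_lemma z k hz hk rfl κ h0 h1 h2
  · intro n hn μ hμ
    refine main_lemma 1 n one_pos (by omega) (by omega) μ ?_ ?_ ?_
    · intro i hi
      have h0i : i.val = 0 := by omega
      rw [hμ i, h0i, Nat.cast_zero, Cardinal.aleph_zero]
    · intro i hi
      rw [hμ i, ← Cardinal.aleph_zero]
      apply Cardinal.aleph_lt_aleph.2
      exact_mod_cast (by omega : 0 < i.val)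
    · intro i i' _ hlt
      rw [hμ i, hμ i']
      apply Cardinal.aleph_lt_aleph.2
      exact_mod_cast (Fin.lt_def.1 hlt)


/-- For `z, k > 0` and `κ` consisting of `z` copies of `ℵ₀` followed by `k` strictly increasing
uncountable cardinals, `H^k(X(κ)⁻, ℤ/2) ≠ 0`. In particular
`H^n(X(ℵ₀, ℵ₁, …, ℵ_{n+1})⁻, ℤ/2) ≠ 0` for every `n ≥ 1`. -/
theorem stmt19 (z k : ℕ) (hz : 0 < z) (hk : 0 < k)
    (κ : Fin (z + k + 1) → Cardinal)
    (h0 : ∀ i : Fin (z + k + 1), (i : ℕ) < z → κ i = ℵ₀)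
    (h1 : ∀ i : Fin (z + k + 1), z ≤ (i : ℕ) → ℵ₀ < κ i)
    (h2 : ∀ i j : Fin (z + k + 1), z ≤ (i : ℕ) → i < j → κ i < κ j) :
    (∃ f : Cochain κ, IsCocycle κ k f ∧ ¬ IsCoboundary κ k f) ∧
    ∀ n : ℕ, 1 ≤ n → ∀ μ : Fin (n + 2) → Cardinal,
      (∀ i : Fin (n + 2), μ i = Cardinal.aleph (i : ℕ)) →
      ∃ f : Cochain μ, IsCocycle μ n f ∧ ¬ IsCoboundary μ n f :=
  stmt19' z k hz hk κ h0 h1 h2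

end
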